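/- Let D ≥ 1 and δ ≥ 2 be integers and let n1, n2 be arbitrary integers. Then Σ_{a=0}^{δ−1} S̃(n1, n2, a; D, Dδ) = 0. -/
import Mathlib


open Complex

/-- `e(x) = exp(2πix)`. -/
noncomputable def eChar (x : ℝ) : ℂ := Complex.exp (2 * Real.pi * Complex.I * (x : ℂ))

/-- The GL(3) Kloosterman sum `S̃(n₁,n₂,m₁;D₁,D₂)` for `D₁ ∣ D₂`, where inverses are taken
via `ZMod`. -/
noncomputable def KloostermanTilde (n1 n2 m1 : ℤ) (D1 D2 : ℕ) : ℂ :=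
  ∑ C1 ∈ (Finset.range D1).filter (fun C1 => Nat.Coprime C1 D1),
    ∑ C2 ∈ (Finset.range D2).filter (fun C2 => Nat.Coprime C2 (D2 / D1)),
      eChar ((n2 : ℝ) * ((((C1 : ZMod D1)⁻¹).val : ℕ) : ℝ) * (C2 : ℝ) / (D1 : ℝ)
        + (m1 : ℝ) * ((((C2 : ZMod (D2 / D1))⁻¹).val : ℕ) : ℝ) / ((D2 / D1 : ℕ) : ℝ)
        + (n1 : ℝ) * (C1 : ℝ) / (D1 : ℝ))

lemma eChar_add (x y : ℝ) : eChar (x + y) = eChar x * eChar y := by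
  simp only [eChar, Complex.ofReal_add, mul_add, Complex.exp_add]

lemma eChar_nat_mul (a : ℕ) (x : ℝ) : eChar (a * x) = eChar x ^ a := by
  simp only [eChar, ← Complex.exp_nat_mul, Complex.ofReal_mul, Complex.ofReal_natCast]
  ring_nf

lemma eChar_nat (n : ℕ) : eChar n = 1 := by
  rw [eChar, Complex.exp_eq_one_iff]
  exact ⟨n, by push_cast; ring⟩

lemma eChar_ne_one {v δ : ℕ} (hv : 0 < v) (hvδ : v < δ) :
    eChar ((v : ℝ) / δ) ≠ 1 := by
  intro hone
  rw [eChar, Complex.exp_eq_one_iff] at hone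
  obtain ⟨m, hm⟩ := hone
  have hne : (2 * (Real.pi : ℂ) * Complex.I) ≠ 0 := by
    simp [Real.pi_ne_zero, Complex.I_ne_zero]
  have h2 : (((v : ℝ) / δ : ℝ) : ℂ) = (m : ℂ) := by
    apply mul_left_cancel₀ hne
    rw [hm]; ring
  have h' : ((v : ℝ) / δ) = (m : ℝ) := by exact_mod_cast h2
  have h0 : (0 : ℝ) < (v : ℝ) / δ := by
    apply div_pos <;> [exact_mod_cast hv; exact_mod_cast (lt_trans hv hvδ)]
  have h1 : (v : ℝ) / δ < 1 := by
    rw [div_lt_one (by exact_mod_cast (lt_trans hv hvδ))]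
    exact_mod_cast hvδ
  rw [h'] at h0 h1
  have : (0 : ℤ) < m := by exact_mod_cast h0
  have : m < 1 := by exact_mod_cast h1
  omega

lemma sum_eChar_vanish {v δ : ℕ} (hv : 0 < v) (hvδ : v < δ) :
    ∑ a ∈ Finset.range δ, (eChar ((v : ℝ) / δ)) ^ a = 0 := by
  rw [geom_sum_eq (eChar_ne_one hv hvδ)]
  have : eChar ((v : ℝ) / δ) ^ δ = 1 := by
    rw [← eChar_nat_mul]
    have hδ0 : (δ : ℝ) ≠ 0 := Nat.cast_ne_zero.mpr (by omega)
    rw [mul_div_cancel₀ _ hδ0, eChar_nat]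
  rw [this, sub_self, zero_div]

lemma zmod_inv_val_congr {q r : ℕ} (h : q = r) (c : ℕ) :
    (((c : ZMod q)⁻¹).val) = (((c : ZMod r)⁻¹).val) := by subst h; rfl

/-- For `δ ≥ 2`, the sum over `a` mod `δ` of `S̃(n₁,n₂,a;D,Dδ)` vanishes. -/
theorem kloosterman_sum_over_a_vanishes (D δ : ℕ) (hD : 1 ≤ D) (hδ : 2 ≤ δ)
    (n1 n2 : ℤ) :
    ∑ a ∈ Finset.range δ, KloostermanTilde n1 n2 (a : ℤ) D (D * δ) = 0 := by
  have hq : D * δ / D = δ := Nat.mul_div_cancel_left δ (by omega)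
  unfold KloostermanTilde
  simp only [hq, zmod_inv_val_congr hq]
  rw [Finset.sum_comm]
  apply Finset.sum_eq_zero
  intro C1 hC1
  rw [Finset.sum_comm]
  apply Finset.sum_eq_zero
  intro C2 hC2
  haveI : NeZero δ := ⟨by omega⟩
  haveI : Fact (1 < δ) := ⟨by omega⟩
  have hcop : Nat.Coprime C2 δ := (Finset.mem_filter.mp hC2).2
  have hvδ : ((C2 : ZMod δ)⁻¹).val < δ := ZMod.val_lt _
  have hv : 0 < ((C2 : ZMod δ)⁻¹).val := by
    rcases Nat.eq_zero_or_pos ((C2 : ZMod δ)⁻¹).val with h0 | h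
    · exfalso
      have hinv : ((C2 : ZMod δ))⁻¹ = 0 := by
        rwa [← ZMod.val_eq_zero]
      have := ZMod.coe_mul_inv_eq_one C2 hcop
      rw [hinv, mul_zero] at this
      exact zero_ne_one this
    · exact h
  have key : ∀ a ∈ Finset.range δ,
      eChar ((n2 : ℝ) * (((((C1 : ZMod D))⁻¹).val : ℕ) : ℝ) * (C2 : ℝ) / (D : ℝ)
        + ((a : ℤ) : ℝ) * ((((C2 : ZMod δ)⁻¹).val : ℕ) : ℝ) / ((δ : ℕ) : ℝ)
        + (n1 : ℝ) * (C1 : ℝ) / (D : ℝ))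
      = (eChar ((n2 : ℝ) * (((((C1 : ZMod D))⁻¹).val : ℕ) : ℝ) * (C2 : ℝ) / (D : ℝ)
          + (n1 : ℝ) * (C1 : ℝ) / (D : ℝ))) * (eChar (((((C2 : ZMod δ)⁻¹).val : ℕ) : ℝ) / δ)) ^ a := by
    intro a _
    rw [← eChar_nat_mul, ← eChar_add]
    congr 1
    push_cast
    ring
  refine (Finset.sum_congr rfl key).trans ?_
  rw [← Finset.mul_sum, sum_eChar_vanish hv hvδ, mul_zero]
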